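/- For 0 < x < 1/16, the function F(x) = ∑_{n=0}^{∞} (−1)ⁿ·binom(2n,n)²·H_n·xⁿ satisfies the fourth-order differential equation x²(16x+1)²F⁗(x) + 5x(32x+1)(16x+1)F‴(x) + 4(1568x²+98x+1)F″(x) + 108(32x+1)F′(x) + 144F(x) = 0. -/

import Mathlib

noncomputable def H (n : ℕ) : ℝ := ∑ k ∈ Finset.range n, 1 / ((k : ℝ) + 1)

noncomputable def F (x : ℝ) : ℝ :=
  ∑' n : ℕ, (-1 : ℝ)^n * (Nat.choose (2 * n) n : ℝ)^2 * H n * x^n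

namespace Stmt15Aux

noncomputable def a (n : ℕ) : ℝ := (-1 : ℝ)^n * (Nat.choose (2 * n) n : ℝ)^2 * H n

noncomputable def sh (c : ℕ → ℝ) : ℕ → ℝ := fun n => ((n : ℝ) + 1) * c (n + 1)

def Nice (c : ℕ → ℝ) : Prop :=
  ∃ C : ℝ, ∃ k : ℕ, 0 ≤ C ∧ ∀ n : ℕ, |c n| ≤ C * ((n : ℝ) + 1)^k * 16^n

lemma H_nonneg (n : ℕ) : 0 ≤ H n :=
  Finset.sum_nonneg fun k _ => by positivity

lemma H_le (n : ℕ) : H n ≤ n := by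
  calc H n ≤ ∑ k ∈ Finset.range n, 1 := by
        apply Finset.sum_le_sum
        intro k _
        rw [div_le_one (by positivity)]
        have : (0:ℝ) ≤ k := Nat.cast_nonneg k
        linarith
    _ = n := by simp

lemma cb_le (n : ℕ) : Nat.choose (2 * n) n ≤ 4 ^ n := by
  induction n with
  | zero => simp
  | succ m ih =>
    have h : (m + 1) * Nat.centralBinom (m + 1) = 2 * (2 * m + 1) * Nat.centralBinom m :=
      Nat.succ_mul_centralBinom_succ m
    have hcb : Nat.centralBinom m = Nat.choose (2 * m) m := rfl
    have hcb1 : Nat.centralBinom (m + 1) = Nat.choose (2 * (m + 1)) (m + 1) := rfl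
    have h2 : (m + 1) * Nat.choose (2 * (m + 1)) (m + 1) ≤ (m + 1) * (4 * Nat.choose (2 * m) m) := by
      rw [← hcb1, h, hcb]
      calc 2 * (2 * m + 1) * Nat.choose (2 * m) m ≤ (4 * (m + 1)) * Nat.choose (2 * m) m := by
            apply Nat.mul_le_mul_right; omega
        _ = (m + 1) * (4 * Nat.choose (2 * m) m) := by ring
    have h3 : Nat.choose (2 * (m + 1)) (m + 1) ≤ 4 * Nat.choose (2 * m) m :=
      Nat.le_of_mul_le_mul_left h2 (Nat.succ_pos m)
    calc Nat.choose (2 * (m + 1)) (m + 1) ≤ 4 * Nat.choose (2 * m) m := h3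
      _ ≤ 4 * 4 ^ m := Nat.mul_le_mul_left 4 ih
      _ = 4 ^ (m + 1) := by ring

lemma nice_a : Nice a := by
  refine ⟨1, 1, by norm_num, fun n => ?_⟩
  have h1 : |a n| = (Nat.choose (2 * n) n : ℝ)^2 * H n := by
    rw [a, abs_mul, abs_mul, abs_pow, abs_neg, abs_one, one_pow, one_mul,
      abs_of_nonneg (H_nonneg n), abs_of_nonneg (by positivity)]
  rw [h1]
  have h2 : ((Nat.choose (2 * n) n : ℝ))^2 ≤ (16:ℝ)^n := by
    have : (Nat.choose (2 * n) n : ℝ) ≤ (4:ℝ)^n := by exact_mod_cast cb_le n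
    calc ((Nat.choose (2 * n) n : ℝ))^2 ≤ ((4:ℝ)^n)^2 := by
          apply pow_le_pow_left₀ (Nat.cast_nonneg _) this
      _ = (16:ℝ)^n := by rw [← pow_mul, mul_comm, pow_mul]; norm_num
  have h3 : H n ≤ (n:ℝ) + 1 := le_trans (H_le n) (by linarith)
  calc ((Nat.choose (2 * n) n : ℝ))^2 * H n ≤ (16:ℝ)^n * ((n:ℝ) + 1) := by
        apply mul_le_mul h2 h3 (H_nonneg n) (by positivity)
    _ = 1 * ((n : ℝ) + 1)^1 * 16^n := by ring

lemma nice_sh {c : ℕ → ℝ} (h : Nice c) : Nice (sh c) := by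
  obtain ⟨C, k, hC, hc⟩ := h
  refine ⟨16 * C * 2^k, k + 1, by positivity, fun n => ?_⟩
  have h1 : |sh c n| = ((n:ℝ) + 1) * |c (n + 1)| := by
    rw [sh, abs_mul, abs_of_nonneg (by positivity)]
  rw [h1]
  have h2 : |c (n+1)| ≤ C * ((n:ℝ) + 1 + 1)^k * 16^(n+1) := by
    have := hc (n + 1); push_cast at this ⊢; linarith
  have h4 : ((n:ℝ) + 1 + 1)^k ≤ 2^k * ((n:ℝ)+1)^k := by
    rw [← mul_pow]
    apply pow_le_pow_left₀ (by positivity)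
    have : (0:ℝ) ≤ n := Nat.cast_nonneg n
    linarith
  calc ((n:ℝ) + 1) * |c (n + 1)| ≤ ((n:ℝ) + 1) * (C * ((n:ℝ) + 1 + 1)^k * 16^(n+1)) := by
        apply mul_le_mul_of_nonneg_left h2 (by positivity)
    _ ≤ ((n:ℝ) + 1) * (C * (2^k * ((n:ℝ)+1)^k) * 16^(n+1)) := by
        apply mul_le_mul_of_nonneg_left _ (by positivity)
        apply mul_le_mul_of_nonneg_right _ (by positivity)
        apply mul_le_mul_of_nonneg_left h4 hC
    _ = 16 * C * 2^k * ((n:ℝ) + 1)^(k+1) * 16^n := by ring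

lemma summable_aux (k : ℕ) (b : ℝ) {q : ℝ} (hq : |q| < 1) :
    Summable fun n : ℕ => ((n : ℝ) + b)^k * q^n := by
  have heq : (fun n : ℕ => ((n : ℝ) + b)^k * q^n)
      = fun n : ℕ => ∑ j ∈ Finset.range (k + 1),
          (b^(k - j) * (Nat.choose k j : ℝ)) * ((n : ℝ)^j * q^n) := by
    funext n
    rw [add_pow, Finset.sum_mul]
    congr 1; funext j; ring
  rw [heq]
  apply summable_sum
  intro j _
  exact (summable_pow_mul_geometric_of_norm_lt_one (R := ℝ) j (by rwa [Real.norm_eq_abs])).mul_left _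

lemma summable_nice {c : ℕ → ℝ} (h : Nice c) {x : ℝ} (hx : |x| < 1/16) :
    Summable fun n : ℕ => c n * x^n := by
  obtain ⟨C, k, hC, hc⟩ := h
  set q : ℝ := 16 * |x| with hqdef
  have hq : |q| < 1 := by
    rw [hqdef, abs_of_nonneg (by positivity)]; linarith
  have hsum : Summable fun n : ℕ => C * (((n:ℝ) + 1)^k * q^n) :=
    (summable_aux k 1 hq).mul_left C
  apply Summable.of_norm_bounded hsum
  intro n
  rw [norm_mul, norm_pow, Real.norm_eq_abs, Real.norm_eq_abs]
  calc |c n| * |x|^n ≤ (C * ((n:ℝ) + 1)^k * 16^n) * |x|^n := by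
        apply mul_le_mul_of_nonneg_right (hc n) (by positivity)
    _ = C * (((n:ℝ) + 1)^k * q^n) := by rw [hqdef, mul_pow]; ring

set_option maxHeartbeats 1000000 in
lemma hasDerivAt_nice {c : ℕ → ℝ} (h : Nice c) {x : ℝ} (hx : |x| < 1/16) :
    HasDerivAt (fun y : ℝ => ∑' n : ℕ, c n * y^n) (∑' n : ℕ, sh c n * x^n) x := by
  obtain ⟨C, k, hC, hc⟩ := h
  set r : ℝ := (|x| + 1/16)/2 with hrdef
  have habs : (0:ℝ) ≤ |x| := abs_nonneg x
  have hr0 : 0 < r := by rw [hrdef]; linarith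
  have hr1 : |x| < r := by rw [hrdef]; linarith
  have hr2 : r < 1/16 := by rw [hrdef]; linarith
  have hq : |16 * r| < 1 := by rw [abs_of_nonneg (by linarith)]; linarith
  set u : ℕ → ℝ := fun n => 16 * C * ((n:ℝ) + 1)^(k+1) * (16*r)^(n-1) with hudef
  have hu : Summable u := by
    have h2 : Summable fun n : ℕ => (16 * C) * (((n:ℝ) + 2)^(k+1) * (16*r)^n) :=
      (summable_aux (k+1) 2 hq).mul_left _
    have h1 : Summable fun n : ℕ => u (n + 1) :=
      h2.congr (fun n => by rw [hudef]; simp only [Nat.add_sub_cancel]; push_cast; ring)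
    exact (summable_nat_add_iff 1).mp h1
  have hg : ∀ (n : ℕ) (y : ℝ), y ∈ Metric.ball (0:ℝ) r →
      HasDerivAt (fun z : ℝ => c n * z^n) (c n * ((n:ℝ) * y^(n-1))) y :=
    fun n y _ => (hasDerivAt_pow n y).const_mul (c n)
  have hg' : ∀ (n : ℕ) (y : ℝ), y ∈ Metric.ball (0:ℝ) r →
      ‖c n * ((n:ℝ) * y^(n-1))‖ ≤ u n := by
    intro n y hy
    have hyr : |y| ≤ r := by
      rw [Metric.mem_ball, Real.dist_eq, sub_zero] at hy; exact hy.le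
    have hy0 : (0:ℝ) ≤ |y| := abs_nonneg y
    match n with
    | 0 =>
      simp only [Nat.cast_zero, zero_mul, mul_zero, norm_zero, hudef]
      have : (0:ℝ) ≤ ((0:ℕ):ℝ) + 1 := by norm_num
      positivity
    | Nat.succ m =>
      have h1 : ‖c (m+1) * ((((m:ℕ)+1 : ℕ):ℝ) * y^(m+1-1))‖
          = |c (m+1)| * (((m:ℝ)+1) * |y|^m) := by
        rw [norm_mul, norm_mul, norm_pow, Real.norm_eq_abs, Real.norm_eq_abs,
          Real.norm_eq_abs, Nat.abs_cast]
        simp only [Nat.add_sub_cancel]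
        push_cast
        ring
      rw [h1]
      have h2 : |c (m+1)| ≤ C * ((m:ℝ) + 1 + 1)^k * 16^(m+1) := by
        have := hc (m+1); push_cast at this; linarith
      have h3 : |y|^m ≤ r^m := pow_le_pow_left₀ hy0 hyr m
      have E : (0:ℝ) ≤ C * ((m:ℝ) + 1 + 1)^k * 16^(m+1) * r^m := by
        apply mul_nonneg
        apply mul_nonneg (mul_nonneg hC (by positivity)) (by positivity)
        exact pow_nonneg hr0.le m
      calc |c (m+1)| * (((m:ℝ)+1) * |y|^m)
          ≤ (C * ((m:ℝ) + 1 + 1)^k * 16^(m+1)) * (((m:ℝ)+1) * r^m) := by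
            apply mul_le_mul h2 _ (by positivity) (by positivity)
            exact mul_le_mul_of_nonneg_left h3 (by positivity)
        _ = (C * ((m:ℝ) + 1 + 1)^k * 16^(m+1) * r^m) * ((m:ℝ)+1) := by ring
        _ ≤ (C * ((m:ℝ) + 1 + 1)^k * 16^(m+1) * r^m) * ((m:ℝ)+1+1) :=
            mul_le_mul_of_nonneg_left (by linarith) E
        _ = u (m+1) := by
            rw [hudef]
            simp only [Nat.add_sub_cancel]
            push_cast
            rw [mul_pow]
            ring
  have hxt : x ∈ Metric.ball (0:ℝ) r := by
    rw [Metric.mem_ball, Real.dist_eq, sub_zero]; exact hr1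
  have hg0 : Summable fun n : ℕ => c n * x^n := summable_nice ⟨C, k, hC, hc⟩ hx
  have Hd := hasDerivAt_tsum_of_isPreconnected hu Metric.isOpen_ball
    (convex_ball (0:ℝ) r).isPreconnected hg hg' hxt hg0 hxt
  have hs : Summable fun n : ℕ => c n * ((n:ℝ) * x^(n-1)) :=
    Summable.of_norm_bounded hu (fun n => hg' n x hxt)
  have heq : (∑' n : ℕ, c n * ((n:ℝ) * x^(n-1))) = ∑' n : ℕ, sh c n * x^n := by
    rw [Summable.tsum_eq_zero_add hs]
    simp only [Nat.cast_zero, zero_mul, mul_zero, zero_add]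
    apply tsum_congr
    intro n
    rw [sh]
    simp only [Nat.add_sub_cancel]
    push_cast
    ring
  exact heq ▸ Hd
lemma key (N : ℕ) :
    16*(2*(N:ℝ)+1)^2*(2*(N:ℝ)+3)^2 * a N + 4*((N:ℝ)+1)*(2*(N:ℝ)+3)^3 * a (N+1)
      + ((N:ℝ)+1)*((N:ℝ)+2)^3 * a (N+2) = 0 := by
  have hN1 : ((N:ℝ)+1) ≠ 0 := by positivity
  have hN2 : ((N:ℝ)+2) ≠ 0 := by positivity
  have hc1n := Nat.succ_mul_centralBinom_succ N
  have hc2n := Nat.succ_mul_centralBinom_succ (N+1)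
  rw [show N+1+1 = N+2 from rfl] at hc2n
  simp only [Nat.centralBinom] at hc1n hc2n
  have hc1 : ((N:ℝ)+1) * (Nat.choose (2*(N+1)) (N+1) : ℝ)
      = 2*(2*(N:ℝ)+1) * (Nat.choose (2*N) N : ℝ) := by exact_mod_cast hc1n
  have hc2 : ((N:ℝ)+2) * (Nat.choose (2*(N+2)) (N+2) : ℝ)
      = 2*(2*(N:ℝ)+3) * (Nat.choose (2*(N+1)) (N+1) : ℝ) := by
    have := congrArg (fun t : ℕ => (t:ℝ)) hc2n
    push_cast at this
    linarith
  have q1 : (Nat.choose (2*(N+1)) (N+1) : ℝ)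
      = 2*(2*(N:ℝ)+1) * (Nat.choose (2*N) N : ℝ) / ((N:ℝ)+1) := by
    rw [eq_div_iff hN1]; linarith
  have q2 : (Nat.choose (2*(N+2)) (N+2) : ℝ)
      = 2*(2*(N:ℝ)+3) * (2*(2*(N:ℝ)+1) * (Nat.choose (2*N) N : ℝ) / ((N:ℝ)+1)) / ((N:ℝ)+2) := by
    rw [eq_div_iff hN2, ← q1]; linarith
  have hH1 : H (N+1) = H N + 1/((N:ℝ)+1) := by
    simp only [H, Finset.sum_range_succ]
  have hH2 : H (N+2) = H N + 1/((N:ℝ)+1) + 1/((N:ℝ)+1+1) := by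
    simp only [H, Finset.sum_range_succ]
    push_cast
    ring
  have hpow1 : (-1:ℝ)^(N+1) = -(-1:ℝ)^N := by rw [pow_succ]; ring
  have hpow2 : (-1:ℝ)^(N+2) = (-1:ℝ)^N := by rw [pow_add]; norm_num
  simp only [a, hpow1, hpow2, hH1, hH2, q1, q2]
  field_simp
  ring
lemma pointwise (x : ℝ) (N : ℕ) :
    256 * ((if 4 ≤ N then sh (sh (sh (sh a))) (N-4) else 0) * x^N)
  + 32 * ((if 3 ≤ N then sh (sh (sh (sh a))) (N-3) else 0) * x^N)
  + 1 * ((if 2 ≤ N then sh (sh (sh (sh a))) (N-2) else 0) * x^N)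
  + 2560 * ((if 3 ≤ N then sh (sh (sh a)) (N-3) else 0) * x^N)
  + 240 * ((if 2 ≤ N then sh (sh (sh a)) (N-2) else 0) * x^N)
  + 5 * ((if 1 ≤ N then sh (sh (sh a)) (N-1) else 0) * x^N)
  + 6272 * ((if 2 ≤ N then sh (sh a) (N-2) else 0) * x^N)
  + 392 * ((if 1 ≤ N then sh (sh a) (N-1) else 0) * x^N)
  + 4 * ((if 0 ≤ N then sh (sh a) (N-0) else 0) * x^N)
  + 3456 * ((if 1 ≤ N then sh a (N-1) else 0) * x^N)
  + 108 * ((if 0 ≤ N then sh a (N-0) else 0) * x^N)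
  + 144 * ((if 0 ≤ N then a (N-0) else 0) * x^N) = 0 := by
  match N with
  | 0 =>
    norm_num [sh]
    have hk := key 0
    norm_num [show (0:ℕ)+1 = 1 from rfl, show (0:ℕ)+2 = 2 from rfl] at hk
    linear_combination hk
  | 1 =>
    norm_num [sh]
    have hk := key 1
    norm_num at hk
    linear_combination x * hk
  | 2 =>
    norm_num [sh]
    have hk := key 2
    norm_num at hk
    linear_combination x^2 * hk
  | 3 =>
    norm_num [sh]
    have hk := key 3
    norm_num at hk
    linear_combination x^3 * hk
  | (n+4) =>
    have h4 : 4 ≤ n+4 := by omega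
    have h3 : 3 ≤ n+4 := by omega
    have h2 : 2 ≤ n+4 := by omega
    have h1 : 1 ≤ n+4 := by omega
    have h0 : 0 ≤ n+4 := by omega
    simp only [if_pos h4, if_pos h3, if_pos h2, if_pos h1, if_pos h0,
      show n+4-4 = n from rfl, show n+4-3 = n+1 from rfl, show n+4-2 = n+2 from rfl,
      show n+4-1 = n+3 from rfl, show n+4-0 = n+4 from rfl, sh,
      show n+1+1 = n+2 from rfl, show n+2+1 = n+3 from rfl, show n+3+1 = n+4 from rfl,
      show n+4+1 = n+5 from rfl, show n+5+1 = n+6 from rfl]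
    have hk := key (n+4)
    push_cast at hk ⊢
    linear_combination x^(n+4) * hk
lemma deriv_congr_ball {f g : ℝ → ℝ} (heq : ∀ y : ℝ, |y| < 1/16 → f y = g y)
    {x : ℝ} (hx : |x| < 1/16) : deriv f x = deriv g x := by
  apply Filter.EventuallyEq.deriv_eq
  have hmem : Metric.ball (0:ℝ) (1/16) ∈ nhds x :=
    Metric.isOpen_ball.mem_nhds (by rw [Metric.mem_ball, Real.dist_eq, sub_zero]; exact hx)
  exact Filter.eventuallyEq_of_mem hmem
    (fun y hy => heq y (by rwa [Metric.mem_ball, Real.dist_eq, sub_zero] at hy))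

lemma F_eq (x : ℝ) : F x = ∑' n : ℕ, a n * x^n := rfl

lemma rep1 : ∀ y : ℝ, |y| < 1/16 → deriv F y = ∑' n : ℕ, sh a n * y^n := by
  intro y hy
  have hF : F = fun z : ℝ => ∑' n : ℕ, a n * z^n := rfl
  rw [hF]
  exact (hasDerivAt_nice nice_a hy).deriv

lemma rep2 : ∀ y : ℝ, |y| < 1/16 →
    iteratedDeriv 2 F y = ∑' n : ℕ, sh (sh a) n * y^n := by
  intro y hy
  rw [show (2:ℕ) = 1+1 from rfl, iteratedDeriv_succ, iteratedDeriv_one]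
  rw [deriv_congr_ball rep1 hy]
  exact (hasDerivAt_nice (nice_sh nice_a) hy).deriv

lemma rep3 : ∀ y : ℝ, |y| < 1/16 →
    iteratedDeriv 3 F y = ∑' n : ℕ, sh (sh (sh a)) n * y^n := by
  intro y hy
  rw [show (3:ℕ) = 2+1 from rfl, iteratedDeriv_succ]
  rw [deriv_congr_ball rep2 hy]
  exact (hasDerivAt_nice (nice_sh (nice_sh nice_a)) hy).deriv

lemma rep4 : ∀ y : ℝ, |y| < 1/16 →
    iteratedDeriv 4 F y = ∑' n : ℕ, sh (sh (sh (sh a))) n * y^n := by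
  intro y hy
  rw [show (4:ℕ) = 3+1 from rfl, iteratedDeriv_succ]
  rw [deriv_congr_ball rep3 hy]
  exact (hasDerivAt_nice (nice_sh (nice_sh (nice_sh nice_a))) hy).deriv

lemma piece {c : ℕ → ℝ} (h : Nice c) {x : ℝ} (hx : |x| < 1/16) (j : ℕ) :
    HasSum (fun N : ℕ => (if j ≤ N then c (N - j) else 0) * x^N)
      (x^j * ∑' n : ℕ, c n * x^n) := by
  have hs : HasSum (fun n : ℕ => x^j * (c n * x^n)) (x^j * ∑' n : ℕ, c n * x^n) :=
    (summable_nice h hx).hasSum.mul_left _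
  have heq : (fun n : ℕ =>
      (fun N : ℕ => (if j ≤ N then c (N - j) else 0) * x^N) (n + j))
      = fun n : ℕ => x^j * (c n * x^n) := by
    funext n
    simp only [if_pos (Nat.le_add_left j n), Nat.add_sub_cancel]
    rw [pow_add]
    ring
  have h2 : HasSum (fun n : ℕ =>
      (fun N : ℕ => (if j ≤ N then c (N - j) else 0) * x^N) (n + j))
      (x^j * ∑' n : ℕ, c n * x^n) := by rw [heq]; exact hs
  have h3 := (hasSum_nat_add_iff (f := fun N : ℕ => (if j ≤ N then c (N - j) else 0) * x^N) j).mp h2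
  have hz : ∑ i ∈ Finset.range j, (if j ≤ i then c (i - j) else 0) * x^i = 0 := by
    apply Finset.sum_eq_zero
    intro i hi
    rw [Finset.mem_range] at hi
    rw [if_neg (by omega), zero_mul]
  rw [hz, add_zero] at h3
  exact h3

end Stmt15Aux

open Stmt15Aux in
theorem stmt15 (x : ℝ) (hx0 : 0 < x) (hx1 : x < 1 / 16) :
    x^2 * (16 * x + 1)^2 * iteratedDeriv 4 F x
      + 5 * x * (32 * x + 1) * (16 * x + 1) * iteratedDeriv 3 F x
      + 4 * (1568 * x^2 + 98 * x + 1) * iteratedDeriv 2 F x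
      + 108 * (32 * x + 1) * deriv F x
      + 144 * F x = 0 := by
  have hx : |x| < 1/16 := by rw [abs_of_pos hx0]; linarith
  have n0 : Nice a := nice_a
  have n1 : Nice (sh a) := nice_sh n0
  have n2 : Nice (sh (sh a)) := nice_sh n1
  have n3 : Nice (sh (sh (sh a))) := nice_sh n2
  have n4 : Nice (sh (sh (sh (sh a)))) := nice_sh n3
  have P1 := (piece n4 hx 4).mul_left 256
  have P2 := (piece n4 hx 3).mul_left 32
  have P3 := (piece n4 hx 2).mul_left 1
  have P4 := (piece n3 hx 3).mul_left 2560
  have P5 := (piece n3 hx 2).mul_left 240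
  have P6 := (piece n3 hx 1).mul_left 5
  have P7 := (piece n2 hx 2).mul_left 6272
  have P8 := (piece n2 hx 1).mul_left 392
  have P9 := (piece n2 hx 0).mul_left 4
  have P10 := (piece n1 hx 1).mul_left 3456
  have P11 := (piece n1 hx 0).mul_left 108
  have P12 := (piece n0 hx 0).mul_left 144
  have Htot := ((((((((((P1.add P2).add P3).add P4).add P5).add P6).add P7).add
    P8).add P9).add P10).add P11).add P12
  have hT : 256 * (x^4 * ∑' n : ℕ, sh (sh (sh (sh a))) n * x^n)
      + 32 * (x^3 * ∑' n : ℕ, sh (sh (sh (sh a))) n * x^n)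
      + 1 * (x^2 * ∑' n : ℕ, sh (sh (sh (sh a))) n * x^n)
      + 2560 * (x^3 * ∑' n : ℕ, sh (sh (sh a)) n * x^n)
      + 240 * (x^2 * ∑' n : ℕ, sh (sh (sh a)) n * x^n)
      + 5 * (x^1 * ∑' n : ℕ, sh (sh (sh a)) n * x^n)
      + 6272 * (x^2 * ∑' n : ℕ, sh (sh a) n * x^n)
      + 392 * (x^1 * ∑' n : ℕ, sh (sh a) n * x^n)
      + 4 * (x^0 * ∑' n : ℕ, sh (sh a) n * x^n)
      + 3456 * (x^1 * ∑' n : ℕ, sh a n * x^n)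
      + 108 * (x^0 * ∑' n : ℕ, sh a n * x^n)
      + 144 * (x^0 * ∑' n : ℕ, a n * x^n) = 0 := by
    rw [← Htot.tsum_eq]
    calc _ = ∑' _ : ℕ, (0:ℝ) := tsum_congr (fun N => pointwise x N)
      _ = 0 := tsum_zero
  rw [F_eq x, rep1 x hx, rep2 x hx, rep3 x hx, rep4 x hx]
  linear_combination hT
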